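/- arXiv:2307.07669 — 3 statements merged into one kernel-verified Lean document; each statement's English description precedes it below -/
import Mathlib

section
/- The composition Ω ∘ Ψ is the identity on proper T-ideals: if J is a proper T-ideal of k⟨X⟩, Ψ(J) the operadic ideal of multilinear identities of k⟨X⟩/J, and Ω(Ψ(J)) the T-ideal generated by all substitution instances Φₙ(θ)(f₁,...,fₙ) with θ ∈ Ψ(J)(n) and fᵢ ∈ k⟨X⟩, then Ω(Ψ(J)) = J. -/
open scoped BigOperators

noncomputable section

namespace AsOperadPaper

/-- The free associative algebra `k⟨X⟩` on countably many indeterminates. -/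
abbrev FX (k : Type) [Field k] := FreeAlgebra k ℕ

variable (k : Type) [Field k]

/-- The multilinear monomial `x_{σ⁻¹(1)} ⋯ x_{σ⁻¹(n)}` attached to a permutation `σ`. -/
def permMono (n : ℕ) (σ : Equiv.Perm (Fin n)) : FreeAlgebra k (Fin n) :=
  (List.ofFn fun i => FreeAlgebra.ι k (σ⁻¹ i)).prod

/-- `Φₙ : k[Sₙ] → k⟨x₁,…,xₙ⟩`, `σ ↦ x_{σ⁻¹(1)} ⋯ x_{σ⁻¹(n)}`. -/
def Phi (n : ℕ) : MonoidAlgebra k (Equiv.Perm (Fin n)) →ₗ[k] FreeAlgebra k (Fin n) :=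
  Finsupp.linearCombination k (permMono k n) ∘ₗ (MonoidAlgebra.coeffLinearEquiv k).toLinearMap

/-- `Vₙ`: the space of multilinear polynomials of degree `n`. -/
def Vmulti (n : ℕ) : Submodule k (FreeAlgebra k (Fin n)) :=
  Submodule.span k (Set.range (permMono k n))

/-- The right `Sₙ`-action on polynomials: `x_{i₁}⋯x_{iₙ} * τ = x_{τ⁻¹(i₁)}⋯x_{τ⁻¹(iₙ)}`. -/
def permAction (n : ℕ) (τ : Equiv.Perm (Fin n)) : FreeAlgebra k (Fin n) →ₐ[k] FreeAlgebra k (Fin n) :=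
  FreeAlgebra.lift k fun j => FreeAlgebra.ι k (τ⁻¹ j)

/-- `Vₙ(A)`: multilinear polynomials of degree `n` that are identities of `A`. -/
def VnA (A : Type) [Ring A] [Algebra k A] (n : ℕ) : Set (FreeAlgebra k (Fin n)) :=
  { f | f ∈ Vmulti k n ∧ ∀ a : Fin n → A, FreeAlgebra.lift k a f = 0 }

/-- The kernel of `γₙ : As(n) → End_A(n)`, i.e. `Φₙ⁻¹(Vₙ(A))`. -/
def kerGamma (A : Type) [Ring A] [Algebra k A] (n : ℕ) :
    Set (MonoidAlgebra k (Equiv.Perm (Fin n))) :=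
  { θ | ∀ a : Fin n → A, FreeAlgebra.lift k a (Phi k n θ) = 0 }

/-- Renaming `x₁,…,xₙ` into the first `n` variables of `k⟨X⟩`. -/
def toFX (n : ℕ) (f : FreeAlgebra k (Fin n)) : FX k :=
  FreeAlgebra.lift k (fun i : Fin n => FreeAlgebra.ι k (i : ℕ)) f

/-- shift of variables used in partial composition -/
def shiftIn (m n : ℕ) (i : Fin m) : FreeAlgebra k (Fin n) →ₐ[k] FreeAlgebra k (Fin (m + n - 1)) :=
  FreeAlgebra.lift k fun t =>
    FreeAlgebra.ι k ⟨i.1 + t.1, by have h1 := i.isLt; have h2 := t.isLt; omega⟩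

/-- substitution of `g` into the `i`-th variable (block substitution). -/
def insertAt (m n : ℕ) (i : Fin m) (g : FreeAlgebra k (Fin n)) :
    FreeAlgebra k (Fin m) →ₐ[k] FreeAlgebra k (Fin (m + n - 1)) :=
  FreeAlgebra.lift k fun j =>
    if h1 : j.1 < i.1 then FreeAlgebra.ι k ⟨j.1, by have := i.isLt; omega⟩
    else if h2 : j.1 = i.1 then shiftIn k m n i g
    else FreeAlgebra.ι k ⟨j.1 + n - 1, by have := j.isLt; omega⟩

/-- The partial composition `μ ∘ᵢ ν`, expressed on the polynomial side:
`f(x₁,…,x_{i-1}, g(xᵢ,…,x_{i+n-1}), x_{i+n},…,x_{m+n-1})`. -/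
def compAt (m n : ℕ) (i : Fin m) (f : FreeAlgebra k (Fin m)) (g : FreeAlgebra k (Fin n)) :
    FreeAlgebra k (Fin (m + n - 1)) :=
  insertAt k m n i g f

/-- An operadic ideal of the associative operad `As` (with `As(n) = k[Sₙ]`):
a collection of `k`-subspaces invariant under the right `Sₙ`-action and closed
under partial composition (on either side) with arbitrary elements of `As`,
where partial composition is read through the identification `Φ`. -/
structure IsOperadicIdeal (I : ∀ n, Set (MonoidAlgebra k (Equiv.Perm (Fin n)))) : Prop where
  zero_mem : ∀ n, (0 : MonoidAlgebra k (Equiv.Perm (Fin n))) ∈ I n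
  add_mem : ∀ n x y, x ∈ I n → y ∈ I n → x + y ∈ I n
  smul_mem : ∀ (n) (c : k) (x), x ∈ I n → c • x ∈ I n
  perm_mem : ∀ (n) (x) (τ : Equiv.Perm (Fin n)), x ∈ I n →
    x * MonoidAlgebra.of k (Equiv.Perm (Fin n)) τ ∈ I n
  comp_mem : ∀ (m n : ℕ) (i : Fin m) (μ : MonoidAlgebra k (Equiv.Perm (Fin m)))
    (ν : MonoidAlgebra k (Equiv.Perm (Fin n)))
    (ρ : MonoidAlgebra k (Equiv.Perm (Fin (m + n - 1)))),
    (μ ∈ I m ∨ ν ∈ I n) →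
    Phi k (m + n - 1) ρ = compAt k m n i (Phi k m μ) (Phi k n ν) → ρ ∈ I (m + n - 1)

/-- A proper operadic ideal: not all of `As`. -/
def OperadProper (I : ∀ n, Set (MonoidAlgebra k (Equiv.Perm (Fin n)))) : Prop :=
  ∃ n, I n ≠ Set.univ

/-- `I` is the operadic ideal of `As` generated by the set `S`. -/
def OperadGeneratedBy (I : ∀ n, Set (MonoidAlgebra k (Equiv.Perm (Fin n))))
    (S : Set (Σ n, MonoidAlgebra k (Equiv.Perm (Fin n)))) : Prop :=
  IsOperadicIdeal k I ∧ (∀ s ∈ S, s.2 ∈ I s.1) ∧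
    ∀ J, IsOperadicIdeal k J → (∀ s ∈ S, s.2 ∈ J s.1) → ∀ n, I n ⊆ J n

/-- A T-ideal: a two-sided ideal stable under every algebra endomorphism of `k⟨X⟩`. -/
def IsTIdeal (J : TwoSidedIdeal (FX k)) : Prop :=
  ∀ φ : FX k →ₐ[k] FX k, ∀ x ∈ J, φ x ∈ J

/-- `J` is the T-ideal of `k⟨X⟩` generated by `S`. -/
def TIdealGeneratedBy (J : TwoSidedIdeal (FX k)) (S : Set (FX k)) : Prop :=
  IsTIdeal k J ∧ (∀ s ∈ S, s ∈ J) ∧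
    ∀ J' : TwoSidedIdeal (FX k), IsTIdeal k J' → (∀ s ∈ S, s ∈ J') → J ≤ J'

/-- `Ψ(J)(n) = Φₙ⁻¹(Vₙ(k⟨X⟩/J))`: the multilinear identities of `k⟨X⟩/J`, i.e. those
`θ` all of whose substitution instances land in `J`. -/
def PsiSet (J : TwoSidedIdeal (FX k)) (n : ℕ) : Set (MonoidAlgebra k (Equiv.Perm (Fin n))) :=
  { θ | ∀ u : Fin n → FX k, FreeAlgebra.lift k u (Phi k n θ) ∈ J }

/-- The set of all substitution instances `Φₙ(θ)(f₁,…,fₙ)`, `θ ∈ I(n)`, `fᵢ ∈ k⟨X⟩`. -/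
def OmegaSet (I : ∀ n, Set (MonoidAlgebra k (Equiv.Perm (Fin n)))) : Set (FX k) :=
  { y | ∃ (n : ℕ) (θ : MonoidAlgebra k (Equiv.Perm (Fin n))) (u : Fin n → FX k),
      θ ∈ I n ∧ y = FreeAlgebra.lift k u (Phi k n θ) }

/-- `Ω(I)`: the ideal of `k⟨X⟩` generated by all substitution instances of elements of `I`. -/
def OmegaI (I : ∀ n, Set (MonoidAlgebra k (Equiv.Perm (Fin n)))) : TwoSidedIdeal (FX k) :=
  TwoSidedIdeal.span (OmegaSet k I)

/-- `Id(A)`: the set of polynomial identities of `A` inside `k⟨X⟩`. -/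
def IdOf (A : Type) [Ring A] [Algebra k A] : Set (FX k) :=
  { f | ∀ φ : FX k →ₐ[k] A, φ f = 0 }

/-- `I_f`: all finite sums `Σ gᵢ f(u_{i1},…,u_{in}) hᵢ`. -/
def Iset (n : ℕ) (f : FreeAlgebra k (Fin n)) : Set (FX k) :=
  { y | ∃ (m : ℕ) (g h : Fin m → FX k) (u : Fin m → Fin n → FX k),
      y = ∑ i, g i * FreeAlgebra.lift k (u i) f * h i }

variable (k : Type) [Field k]

lemma lift_comp_lift {n : ℕ} (u : Fin n → FX k) (φ : FX k →ₐ[k] FX k)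
    (f : FreeAlgebra k (Fin n)) :
    φ (FreeAlgebra.lift k u f) = FreeAlgebra.lift k (fun i => φ (u i)) f := by
  have : φ.comp (FreeAlgebra.lift k u) = FreeAlgebra.lift k (fun i => φ (u i)) := by
    apply FreeAlgebra.hom_ext
    ext i
    simp
  exact DFunLike.congr_fun this f

lemma lift_eq_phi_toFX {n : ℕ} (u : Fin n → FX k) (f : FreeAlgebra k (Fin n)) :
    FreeAlgebra.lift k u f =
      (FreeAlgebra.lift k (fun j : ℕ => if h : j < n then u ⟨j, h⟩ else 0)) (toFX k n f) := by
  unfold toFX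
  rw [lift_comp_lift]
  have h : (fun i : Fin n =>
      (FreeAlgebra.lift k (fun j : ℕ => if h : j < n then u ⟨j, h⟩ else 0))
        (FreeAlgebra.ι k (i : ℕ))) = u := by
    funext i; simp [i.isLt]
  rw [h]

lemma phi_surj_on_Vmulti {n : ℕ} (f : FreeAlgebra k (Fin n)) (hf : f ∈ Vmulti k n) :
    ∃ θ, Phi k n θ = f := by
  have : f ∈ LinearMap.range (Phi k n) := by
    rw [Phi, LinearMap.range_comp_of_range_eq_top _ (LinearEquiv.range _),
      Finsupp.range_linearCombination]; exact hf
  exact this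

theorem Omega_Psi_eq_id [CharZero k]
    (hKemer : ∀ J' : TwoSidedIdeal (FX k), IsTIdeal k J' → J' ≠ ⊤ →
      ∃ S : Finset (Σ n, FreeAlgebra k (Fin n)), (∀ w ∈ S, w.2 ∈ Vmulti k w.1) ∧
        TIdealGeneratedBy k J' {y | ∃ w ∈ S, y = toFX k w.1 w.2})
    (J : TwoSidedIdeal (FX k)) (hJ : IsTIdeal k J) (hJp : J ≠ ⊤) :
    OmegaI k (PsiSet k J) = J := by
  apply le_antisymm
  · -- Ω(Ψ(J)) ≤ J : every substitution instance of an identity of k⟨X⟩/J lies in J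
    intro x hx
    have hx' : x ∈ TwoSidedIdeal.span (OmegaSet k (PsiSet k J)) := hx
    rw [TwoSidedIdeal.mem_span_iff] at hx'
    refine hx' J ?_
    rintro y ⟨n, θ, u, hθ, rfl⟩
    exact hθ u
  · -- J ≤ Ω(Ψ(J)) : use Kemer's theorem
    obtain ⟨S, hSmult, hgen⟩ := hKemer J hJ hJp
    refine hgen.2.2 (OmegaI k (PsiSet k J)) ?_ ?_
    · -- Ω(Ψ(J)) is a T-ideal
      intro φ x hx
      have hx' : x ∈ TwoSidedIdeal.span (OmegaSet k (PsiSet k J)) := hx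
      rw [TwoSidedIdeal.mem_span_iff] at hx'
      have := hx' (TwoSidedIdeal.comap φ.toRingHom (OmegaI k (PsiSet k J))) ?_
      · rwa [TwoSidedIdeal.mem_comap] at this
      · rintro y ⟨n, θ, u, hθ, rfl⟩
        rw [SetLike.mem_coe, TwoSidedIdeal.mem_comap]
        have : φ.toRingHom (FreeAlgebra.lift k u (Phi k n θ)) =
            FreeAlgebra.lift k (fun i => φ (u i)) (Phi k n θ) :=
          lift_comp_lift k u φ (Phi k n θ)
        rw [this]
        exact TwoSidedIdeal.subset_span ⟨n, θ, fun i => φ (u i), hθ, rfl⟩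
    · -- each Kemer generator lies in Ω(Ψ(J))
      rintro s ⟨⟨n, f⟩, hwS, rfl⟩
      obtain ⟨θ, hθ⟩ := phi_surj_on_Vmulti k f (hSmult _ hwS)
      have hθJ : θ ∈ PsiSet k J n := by
        intro u
        rw [hθ, lift_eq_phi_toFX]
        exact hJ _ _ (hgen.2.1 _ ⟨⟨n, f⟩, hwS, rfl⟩)
      have : toFX k n f =
          FreeAlgebra.lift k (fun i : Fin n => FreeAlgebra.ι k (i : ℕ)) (Phi k n θ) := by
        rw [hθ]; rfl
      rw [this]
      exact TwoSidedIdeal.subset_span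
        ⟨n, θ, fun i : Fin n => FreeAlgebra.ι k (i : ℕ), hθJ, rfl⟩


end AsOperadPaper
end
end

section
/- Under the bijection (Ψ, Ω) between proper T-ideals of k⟨X⟩ and proper operadic ideals of As: if a T-ideal J is generated as a T-ideal by multilinear polynomials f₁,...,f_s, then the operadic ideal Ψ(J) is generated as an operadic ideal of As by the elements Φ⁻¹_{deg fᵢ}(fᵢ), i = 1,...,s. -/
open scoped BigOperators

noncomputable section

namespace AsOperadPaper

variable (k : Type) [Field k]

variable (k : Type) [Field k]

/-- Composing an algebra map with a lift out of a free algebra. -/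
lemma comp_lift {X A B : Type} [Ring A] [Algebra k A] [Ring B] [Algebra k B]
    (φ : A →ₐ[k] B) (u : X → A) :
    φ.comp (FreeAlgebra.lift k u) = FreeAlgebra.lift k (fun x => φ (u x)) := by
  apply FreeAlgebra.hom_ext
  funext x
  simp

/-- Any substitution instance of `f` is the image of `toFX f` under an endomorphism. -/
lemma exists_endo (n : ℕ) (u : Fin n → FX k) :
    ∃ φ : FX k →ₐ[k] FX k,
      ∀ f : FreeAlgebra k (Fin n), φ (toFX k n f) = FreeAlgebra.lift k u f := by
  refine ⟨FreeAlgebra.lift k (fun m : ℕ => if h : m < n then u ⟨m, h⟩ else FreeAlgebra.ι k m),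
    fun f => ?_⟩
  have h : (FreeAlgebra.lift k
        (fun m : ℕ => if h : m < n then u ⟨m, h⟩ else FreeAlgebra.ι k m)).comp
        (FreeAlgebra.lift k (fun i : Fin n => FreeAlgebra.ι k (i : ℕ)))
      = FreeAlgebra.lift k u := by
    apply FreeAlgebra.hom_ext
    funext i
    simp [i.isLt]
  exact DFunLike.congr_fun h f

/-- Intersection of two operadic ideals is an operadic ideal. -/
lemma inter_operadic {I₁ I₂ : ∀ n, Set (MonoidAlgebra k (Equiv.Perm (Fin n)))}
    (h₁ : IsOperadicIdeal k I₁) (h₂ : IsOperadicIdeal k I₂) :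
    IsOperadicIdeal k (fun n => I₁ n ∩ I₂ n) := by
  constructor
  · exact fun n => ⟨h₁.zero_mem n, h₂.zero_mem n⟩
  · exact fun n x y hx hy => ⟨h₁.add_mem n x y hx.1 hy.1, h₂.add_mem n x y hx.2 hy.2⟩
  · exact fun n c x hx => ⟨h₁.smul_mem n c x hx.1, h₂.smul_mem n c x hx.2⟩
  · exact fun n x τ hx => ⟨h₁.perm_mem n x τ hx.1, h₂.perm_mem n x τ hx.2⟩
  · intro m n i μ ν ρ h hρ
    exact ⟨h₁.comp_mem m n i μ ν ρ (h.imp And.left And.left) hρ,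
      h₂.comp_mem m n i μ ν ρ (h.imp And.right And.right) hρ⟩

theorem Psi_of_generated_TIdeal [CharZero k]
    (hPsiOp : ∀ J : TwoSidedIdeal (FX k), IsTIdeal k J → J ≠ ⊤ →
      IsOperadicIdeal k (PsiSet k J) ∧ OperadProper k (PsiSet k J))
    (hinv1 : ∀ J : TwoSidedIdeal (FX k), IsTIdeal k J → J ≠ ⊤ → OmegaI k (PsiSet k J) = J)
    (hinv2 : ∀ I, IsOperadicIdeal k I → OperadProper k I →
      ∀ n, PsiSet k (OmegaI k I) n = I n)
    (J : TwoSidedIdeal (FX k)) (hJ : IsTIdeal k J) (hJp : J ≠ ⊤)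
    (s : ℕ) (f : Fin s → Σ n, FreeAlgebra k (Fin n))
    (hml : ∀ i, (f i).2 ∈ Vmulti k (f i).1)
    (hgen : TIdealGeneratedBy k J {y | ∃ i, y = toFX k (f i).1 (f i).2}) :
    ∃ θ : (i : Fin s) → MonoidAlgebra k (Equiv.Perm (Fin (f i).1)),
      (∀ i, Phi k (f i).1 (θ i) = (f i).2) ∧
      OperadGeneratedBy k (PsiSet k J) {w | ∃ i, w = ⟨(f i).1, θ i⟩} := by
  classical
  -- choose preimages under Φ
  have hθex : ∀ i, ∃ θ, Phi k (f i).1 θ = (f i).2 := by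
    intro i
    have h := hml i
    rw [Vmulti, ← Finsupp.range_linearCombination] at h
    obtain ⟨x, hx⟩ := h
    exact ⟨(MonoidAlgebra.coeffLinearEquiv k).symm x, by
      rw [Phi, LinearMap.comp_apply, LinearEquiv.coe_coe, LinearEquiv.apply_symm_apply]; exact hx⟩
  choose θ hθ using hθex
  obtain ⟨hop, hprop⟩ := hPsiOp J hJ hJp
  -- each θ i lies in Ψ(J)
  have hθmem : ∀ i, θ i ∈ PsiSet k J (f i).1 := by
    intro i u
    rw [hθ i]
    obtain ⟨φ, hφ⟩ := exists_endo k (f i).1 u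
    rw [← hφ]
    exact hJ φ _ (hgen.2.1 _ ⟨i, rfl⟩)
  refine ⟨θ, hθ, hop, ?_, ?_⟩
  · rintro s ⟨i, rfl⟩
    exact hθmem i
  · -- minimality
    intro J' hJ' hSJ' n
    set I' : ∀ n, Set (MonoidAlgebra k (Equiv.Perm (Fin n))) :=
      fun n => J' n ∩ PsiSet k J n with hI'
    have hI'op : IsOperadicIdeal k I' := inter_operadic k hJ' hop
    have hI'prop : OperadProper k I' := by
      obtain ⟨m, hm⟩ := hprop
      refine ⟨m, fun h => hm ?_⟩
      have : Set.univ ⊆ PsiSet k J m := by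
        rw [← h]; exact fun x hx => hx.2
      exact Set.univ_subset_iff.mp this
    have hθI' : ∀ i, θ i ∈ I' (f i).1 := fun i =>
      ⟨hSJ' ⟨(f i).1, θ i⟩ ⟨i, rfl⟩, hθmem i⟩
    -- Ω(I') is a T-ideal
    have hT : IsTIdeal k (OmegaI k I') := by
      intro φ x hx
      rw [OmegaI, TwoSidedIdeal.mem_span_iff] at hx
      have h2 := hx (TwoSidedIdeal.comap φ (OmegaI k I')) ?_
      · rwa [TwoSidedIdeal.mem_comap] at h2
      · intro z hz
        rw [SetLike.mem_coe, TwoSidedIdeal.mem_comap]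
        apply TwoSidedIdeal.subset_span
        obtain ⟨m, θ', u, hθ', rfl⟩ := hz
        exact ⟨m, θ', fun j => φ (u j), hθ',
          DFunLike.congr_fun (comp_lift k φ u) (Phi k m θ')⟩
    -- Ω(I') contains the generators of J
    have hgen' : ∀ s ∈ {y | ∃ i, y = toFX k (f i).1 (f i).2}, s ∈ OmegaI k I' := by
      rintro s ⟨i, rfl⟩
      apply TwoSidedIdeal.subset_span
      exact ⟨(f i).1, θ i, fun j => FreeAlgebra.ι k (j : ℕ), hθI' i, by rw [hθ i]; rfl⟩
    have hle : J ≤ OmegaI k I' := hgen.2.2 _ hT hgen'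
    -- conclude via hinv2
    intro θ₀ hθ₀
    have h1 : θ₀ ∈ PsiSet k (OmegaI k I') n := fun u => hle (hθ₀ u)
    rw [hinv2 I' hI'op hI'prop n] at h1
    exact h1.1


end AsOperadPaper
end
end

section
/- Assuming every proper operadic ideal of As is generated by a single element, every proper T-ideal of k⟨X⟩ is generated by one multilinear polynomial as a T-ideal: namely if I = Ψ(J) is generated by θ ∈ I(n), then J is the T-ideal generated by the multilinear polynomial Φₙ(θ). -/
open scoped BigOperators

noncomputable section

namespace AsOperadPaper

variable (k : Type) [Field k]

variable (k : Type) [Field k]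

theorem proper_TIdeal_generated_by_one_multilinear [CharZero k]
    (hPsiOp : ∀ J : TwoSidedIdeal (FX k), IsTIdeal k J → J ≠ ⊤ →
      IsOperadicIdeal k (PsiSet k J) ∧ OperadProper k (PsiSet k J))
    (hinv1 : ∀ J : TwoSidedIdeal (FX k), IsTIdeal k J → J ≠ ⊤ → OmegaI k (PsiSet k J) = J)
    (hinv2 : ∀ I, IsOperadicIdeal k I → OperadProper k I →
      ∀ n, PsiSet k (OmegaI k I) n = I n)
    (hsingle : ∀ I, IsOperadicIdeal k I → OperadProper k I →
      ∃ (n : ℕ) (θ : MonoidAlgebra k (Equiv.Perm (Fin n))), θ ∈ I n ∧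
        OperadGeneratedBy k I {⟨n, θ⟩})
    (J : TwoSidedIdeal (FX k)) (hJ : IsTIdeal k J) (hJp : J ≠ ⊤) :
    (∃ (n : ℕ) (θ : MonoidAlgebra k (Equiv.Perm (Fin n))), θ ∈ PsiSet k J n ∧
      OperadGeneratedBy k (PsiSet k J) {⟨n, θ⟩}) ∧
    ∀ (n : ℕ) (θ : MonoidAlgebra k (Equiv.Perm (Fin n))), θ ∈ PsiSet k J n →
      OperadGeneratedBy k (PsiSet k J) {⟨n, θ⟩} →
      TIdealGeneratedBy k J {toFX k n (Phi k n θ)} := by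
  obtain ⟨hIop, hIprop⟩ := hPsiOp J hJ hJp
  constructor
  · exact hsingle _ hIop hIprop
  · intro n θ hθ hgen
    refine ⟨hJ, ?_, ?_⟩
    · intro s hs
      rcases hs with rfl
      exact hθ (fun i : Fin n => FreeAlgebra.ι k (i : ℕ))
    · intro J' hJ'T hJ'gen
      by_cases hJ'top : J' = ⊤
      · intro x _; rw [hJ'top]; trivial
      -- θ ∈ PsiSet k J'
      have hgenJ' : toFX k n (Phi k n θ) ∈ J' := hJ'gen _ rfl
      have hθJ' : θ ∈ PsiSet k J' n := by
        intro u
        set φ : FX k →ₐ[k] FX k :=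
          FreeAlgebra.lift k (fun m : ℕ => if h : m < n then u ⟨m, h⟩ else 0) with hφ
        have hcomp : (φ.comp (FreeAlgebra.lift k fun i : Fin n => FreeAlgebra.ι k (i : ℕ)))
            = FreeAlgebra.lift k u := by
          apply FreeAlgebra.hom_ext
          funext i
          simp [hφ, i.isLt]
        have := congrArg (fun ψ : FreeAlgebra k (Fin n) →ₐ[k] FX k => ψ (Phi k n θ)) hcomp
        simp only [AlgHom.comp_apply] at this
        rw [← this]
        exact hJ'T φ _ hgenJ'
      have hsub : ∀ m, PsiSet k J m ⊆ PsiSet k J' m := by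
        have := (hPsiOp J' hJ'T hJ'top).1
        exact hgen.2.2 _ this (by rintro s hs; rcases hs with rfl; exact hθJ')
      -- J = OmegaI (PsiSet k J) ≤ J'
      have hJeq := hinv1 J hJ hJp
      intro x hxJ
      rw [← hJeq] at hxJ
      have : OmegaSet k (PsiSet k J) ⊆ (J' : Set (FX k)) := by
        rintro y ⟨m, θ', u, hθ', rfl⟩
        exact hsub m hθ' u
      exact (TwoSidedIdeal.mem_span_iff.mp hxJ) J' this


end AsOperadPaper
end
end
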